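/- If X ⊆ 2^ω has strong measure zero and G ⊆ 2^ω is comeager (its complement is meager), then there exists z ∈ 2^ω with X ⊆ G + z. -/

import Mathlib

open MeasureTheory Set Pointwise
open scoped ENNReal

/-- The Cantor space `2^ω = ℕ → ZMod 2`, with coordinatewise addition mod 2. -/
abbrev Cantor : Type := ℕ → ZMod 2

open Classical in
/-- The standard metric on the Cantor space: `d(x,y) = 2^{-min{n : x n ≠ y n}}`,
and `d(x,x) = 0`. -/
noncomputable def cdist (x y : Cantor) : ℝ :=
  if h : x = y then 0 else (2 : ℝ) ^ (-(Nat.find (Function.ne_iff.mp h) : ℤ))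

/-- The diameter of a subset of the Cantor space with respect to `cdist`. -/
noncomputable def cdiam (s : Set Cantor) : ℝ := sSup (Set.image2 cdist s s)

/-- `X ⊆ 2^ω` has strong measure zero if for every sequence `(εₙ)` of positive reals
there are sets `Xₙ` with `X = ⋃ₙ Xₙ` and `diam Xₙ < εₙ`. -/
def StrongMeasureZero (X : Set Cantor) : Prop :=
  ∀ ε : ℕ → ℝ, (∀ n, 0 < ε n) →
    ∃ Y : ℕ → Set Cantor, X = ⋃ n, Y n ∧ ∀ n, cdiam (Y n) < ε n

namespace GMSAux

/-- Basic cylinder: points agreeing with `σ` on coordinates `< m`. -/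
def cyl (σ : Cantor) (m : ℕ) : Set Cantor := {y | ∀ i < m, y i = σ i}

lemma mem_cyl_self (σ : Cantor) (m : ℕ) : σ ∈ cyl σ m := fun _ _ => rfl

lemma cyl_mono (σ : Cantor) {m m' : ℕ} (h : m ≤ m') : cyl σ m' ⊆ cyl σ m :=
  fun _ hy i hi => hy i (lt_of_lt_of_le hi h)

lemma isOpen_cyl (σ : Cantor) (m : ℕ) : IsOpen (cyl σ m) := by
  have : cyl σ m = ⋂ i ∈ Finset.range m, ((fun y : Cantor => y i) ⁻¹' {σ i}) := by
    ext y; simp [cyl]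
  rw [this]
  exact isOpen_biInter_finset fun i _ =>
    (continuous_apply i).isOpen_preimage _ (isOpen_discrete _)

lemma exists_cyl_subset {U : Set Cantor} (hU : IsOpen U) {y : Cantor} (hy : y ∈ U) :
    ∃ m, cyl y m ⊆ U := by
  obtain ⟨I, u, h1, h2⟩ := isOpen_pi_iff.mp hU y hy
  refine ⟨(I.sup id) + 1, fun w hw => h2 fun i hi => ?_⟩
  have hwi : w i = y i := hw i (Nat.lt_succ_of_le (Finset.le_sup (f := id) hi))
  rw [hwi]; exact (h1 i hi).2

lemma dense_step {U : Set Cantor} (hU : IsOpen U) (hd : Dense U) (ρ : Cantor) (l : ℕ) :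
    ∃ m, ∃ τ : Cantor, (∀ i < l, τ i = ρ i) ∧ cyl τ m ⊆ U := by
  obtain ⟨y, hyU, hyc⟩ := hd.exists_mem_open (isOpen_cyl ρ l) ⟨ρ, mem_cyl_self ρ l⟩
  obtain ⟨m, hm⟩ := exists_cyl_subset hU hyU
  exact ⟨m, y, fun i hi => hyc i hi, hm⟩

/-- Key uniform lemma: for a dense open set one can find a single level `m > l` that works
for all possible first `l` coordinates. -/
lemma key (U : Set Cantor) (hU : IsOpen U) (hd : Dense U) (l : ℕ) :
    ∃ m, l < m ∧ ∀ ρ : Cantor, ∃ τ : Cantor, (∀ i < l, τ i = ρ i) ∧ cyl τ m ⊆ U := by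
  classical
  choose mf tf h1 h2 using fun g : Fin l → ZMod 2 =>
    dense_step hU hd (fun i => if h : i < l then g ⟨i, h⟩ else 0) l
  refine ⟨l + 1 + Finset.univ.sup mf, by omega, fun ρ => ?_⟩
  set g : Fin l → ZMod 2 := fun i => ρ i with hg
  have hle : mf g ≤ l + 1 + Finset.univ.sup mf := by
    have := Finset.le_sup (f := mf) (Finset.mem_univ g); omega
  refine ⟨tf g, fun i hi => ?_, (cyl_mono _ hle).trans (h2 g)⟩
  rw [h1 g i hi]; simp [hi, hg]

lemma cdist_le_one (x y : Cantor) : cdist x y ≤ 1 := by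
  classical
  unfold cdist
  split
  · norm_num
  · calc (2:ℝ) ^ (-(Nat.find _ : ℤ)) ≤ (2:ℝ) ^ (0:ℤ) :=
        zpow_le_zpow_right₀ one_le_two (by omega)
    _ = 1 := by norm_num

lemma agree_of_cdist_lt {x y : Cantor} {l : ℕ} (h : cdist x y < (2:ℝ) ^ (-(l:ℤ))) :
    ∀ i < l, x i = y i := by
  classical
  intro i hi
  unfold cdist at h
  split at h
  · next heq => rw [heq]
  · next hne =>
      set N := Nat.find (Function.ne_iff.mp hne) with hN
      have hln : (l : ℤ) < (N : ℤ) := by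
        by_contra hle
        push_neg at hle
        have h2 : (2:ℝ) ^ (-(l:ℤ)) ≤ (2:ℝ) ^ (-(N:ℤ)) :=
          zpow_le_zpow_right₀ one_le_two (by omega)
        exact absurd h2 (not_le.mpr h)
      have hin : i < N := by omega
      have := Nat.find_min (Function.ne_iff.mp hne) hin
      simpa using this

lemma cdist_le_cdiam {Y : Set Cantor} {x y : Cantor} (hx : x ∈ Y) (hy : y ∈ Y) :
    cdist x y ≤ cdiam Y := by
  apply le_csSup
  · refine ⟨1, fun r hr => ?_⟩
    obtain ⟨a, _, b, _, rfl⟩ := hr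
    exact cdist_le_one a b
  · exact Set.mem_image2_of_mem hx hy

lemma exists_dense_open_seq {G : Set Cantor} (hG : IsMeagre Gᶜ) :
    ∃ U : ℕ → Set Cantor, (∀ n, IsOpen (U n)) ∧ (∀ n, Dense (U n)) ∧ (⋂ n, U n) ⊆ G := by
  have hres : G ∈ residual Cantor := by rwa [IsMeagre, compl_compl] at hG
  obtain ⟨S, hSo, hSd, hSc, hSs⟩ := mem_residual_iff.mp hres
  obtain ⟨f, hf⟩ := (hSc.insert univ).exists_eq_range (insert_nonempty _ _)
  have hmem : ∀ n, f n ∈ insert univ S := fun n => hf ▸ mem_range_self n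
  refine ⟨f, fun n => ?_, fun n => ?_, ?_⟩
  · rcases hmem n with h | h
    · rw [h]; exact isOpen_univ
    · exact hSo _ h
  · rcases hmem n with h | h
    · rw [h]; exact dense_univ
    · exact hSd _ h
  · have : (⋂ n, f n) = ⋂₀ insert univ S := by rw [← Set.sInter_range, hf]
    rw [this, Set.sInter_insert]
    exact (Set.inter_subset_right).trans hSs

end GMSAux

open GMSAux in
/-- A strong measure zero set can be covered by a translation of any comeager set. -/
theorem strongMeasureZero_subset_translate_of_comeager
    (X G : Set Cantor) (hX : StrongMeasureZero X) (hG : IsMeagre Gᶜ) :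
    ∃ z : Cantor, X ⊆ G + {z} := by
  classical
  obtain ⟨U, hUo, hUd, hUG⟩ := exists_dense_open_seq hG
  -- finite intersections of the dense open sets
  set V : ℕ → Set Cantor := fun n => ⋂ k ∈ Finset.range (n+1), U k with hVdef
  have hVsucc : ∀ n, V (n+1) = U (n+1) ∩ V n := by
    intro n
    ext y
    simp only [hVdef, Set.mem_iInter, Finset.mem_range, Set.mem_inter_iff]
    constructor
    · intro h; exact ⟨h (n+1) (by omega), fun k hk => h k (by omega)⟩
    · rintro ⟨h1, h2⟩ k hk
      rcases Nat.lt_succ_iff_lt_or_eq.mp hk with h | h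
      · exact h2 k h
      · rw [h]; exact h1
  have hVo : ∀ n, IsOpen (V n) := fun n => isOpen_biInter_finset fun k _ => hUo k
  have hVd : ∀ n, Dense (V n) := by
    intro n
    induction n with
    | zero =>
        have : V 0 = U 0 := by simp [hVdef]
        rw [this]; exact hUd 0
    | succ n ih =>
        rw [hVsucc]
        exact (hUd (n+1)).inter_of_isOpen_left ih (hUo (n+1))
  have hVsub : ∀ n k, k ≤ n → V n ⊆ U k := by
    intro n k h
    exact Set.biInter_subset_of_mem (Finset.mem_range.mpr (by omega))
  -- the key choices
  choose mf hml tf htf1 htf2 using fun n l => key (V n) (hVo n) (hVd n) l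
  -- the sequence of levels
  set L : ℕ → ℕ := fun n => Nat.rec 0 (fun k ih => mf k ih) n with hLdef
  have hLs : ∀ n, L (n+1) = mf n (L n) := fun n => rfl
  have hLlt : ∀ n, L n < L (n+1) := fun n => by rw [hLs]; exact hml n (L n)
  have hLsm : StrictMono L := strictMono_nat_of_lt_succ hLlt
  have hLge : ∀ n, n ≤ L n := fun n => hLsm.le_apply
  -- covers from strong measure zero
  choose Z hZcov hZdiam using fun r : ℕ =>
    hX (fun i => (2:ℝ) ^ (-(L (Nat.pair r i + 1) : ℤ))) (fun i => zpow_pos two_pos _)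
  set Y : ℕ → Set Cantor := fun n => Z n.unpair.1 n.unpair.2 with hYdef
  have hYdiam : ∀ n, cdiam (Y n) < (2:ℝ) ^ (-(L (n+1) : ℤ)) := by
    intro n
    have := hZdiam n.unpair.1 n.unpair.2
    rwa [Nat.pair_unpair] at this
  have hYcover : ∀ x ∈ X, ∀ k, ∃ n, k ≤ n ∧ x ∈ Y n := by
    intro x hx k
    have hx2 : x ∈ ⋃ i, Z k i := (hZcov k) ▸ hx
    obtain ⟨i, hi⟩ := mem_iUnion.mp hx2
    exact ⟨Nat.pair k i, Nat.left_le_pair k i,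
      by simpa [hYdef, Nat.unpair_pair] using hi⟩
  -- the recursive construction of approximations to z
  set s : ℕ → Cantor := fun n => Nat.rec (0 : Cantor) (fun k sk =>
    if h : (Y k).Nonempty then h.choose + tf k (L k) (h.choose + sk) else sk) n with hsdef
  have hss : ∀ k, s (k+1) =
      (if h : (Y k).Nonempty then h.choose + tf k (L k) (h.choose + s k) else s k) :=
    fun k => rfl
  have hcoh1 : ∀ k, ∀ i < L k, s (k+1) i = s k i := by
    intro k i hi
    rw [hss]
    split
    · next h =>
        have h1 : tf k (L k) (h.choose + s k) i = (h.choose + s k) i :=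
          htf1 k (L k) (h.choose + s k) i hi
        show h.choose i + tf k (L k) (h.choose + s k) i = s k i
        rw [h1]
        show h.choose i + (h.choose i + s k i) = s k i
        rw [← add_assoc, CharTwo.add_self_eq_zero, zero_add]
    · rfl
  have hcoh : ∀ k m, k ≤ m → ∀ i < L k, s m i = s k i := by
    intro k m hkm
    induction m, hkm using Nat.le_induction with
    | base => intro i _; rfl
    | succ m hm ih =>
        intro i hi
        have h1 : i < L m := lt_of_lt_of_le hi (hLsm.monotone hm)
        rw [hcoh1 m i h1, ih i hi]
  set z : Cantor := fun i => s (i+1) i with hzdef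
  have hz : ∀ k, ∀ i < L k, z i = s k i := by
    intro k i hi
    rcases le_total k (i+1) with h | h
    · exact hcoh k (i+1) h i hi
    · exact (hcoh (i+1) k h i (lt_of_lt_of_le (Nat.lt_succ_self i) (hLge (i+1)))).symm
  -- the main property
  have hmain : ∀ n, ∀ x ∈ Y n, x + z ∈ V n := by
    intro n x hx
    have hne : (Y n).Nonempty := ⟨x, hx⟩
    have hxn : hne.choose ∈ Y n := hne.choose_spec
    have hsub : cyl (tf n (L n) (hne.choose + s n)) (L (n+1)) ⊆ V n := by
      have := htf2 n (L n) (hne.choose + s n)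
      rwa [← hLs n] at this
    apply hsub
    intro i hi
    have hagree : x i = hne.choose i :=
      agree_of_cdist_lt (lt_of_le_of_lt (cdist_le_cdiam hx hxn) (hYdiam n)) i hi
    have hzi : z i = s (n+1) i := hz (n+1) i hi
    have hs1 : s (n+1) i = hne.choose i + tf n (L n) (hne.choose + s n) i := by
      rw [hss, dif_pos hne]; rfl
    show x i + z i = tf n (L n) (hne.choose + s n) i
    rw [hagree, hzi, hs1, ← add_assoc, CharTwo.add_self_eq_zero, zero_add]
  refine ⟨z, fun x hx => ?_⟩
  have hxzG : x + z ∈ G := by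
    apply hUG
    rw [mem_iInter]
    intro k
    obtain ⟨n, hkn, hxn⟩ := hYcover x hx k
    exact hVsub n k hkn (hmain n x hxn)
  rw [Set.mem_add]
  refine ⟨x + z, hxzG, z, rfl, ?_⟩
  funext i
  show (x i + z i) + z i = x i
  rw [add_assoc, CharTwo.add_self_eq_zero, add_zero]
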